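/- For w ∈ I(θ) and s ∈ S, ℓ(ws) < ℓ(w) if and only if ℓ(w·s̲) < ℓ(w), where ℓ is the Coxeter length and w·s̲ is the twisted action. -/

import Mathlib

namespace StrongExch

open CoxeterSystem List

variable {B W : Type*} [Group W] {M : CoxeterMatrix B} (cs : CoxeterSystem M W)
variable [DecidableEq W]
set_option linter.unusedSectionVars false

/-- the basic involution on `W × ZMod 2` attached to a simple reflection -/
def etaFun (i : B) : W × ZMod 2 → W × ZMod 2 :=
  fun p => (cs.simple i * p.1 * cs.simple i, p.2 + if p.1 = cs.simple i then 1 else 0)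

lemma etaFun_involutive (i : B) : Function.Involutive (etaFun cs i) := by
  intro p
  unfold etaFun
  have h1 : cs.simple i * (cs.simple i * p.1 * cs.simple i) * cs.simple i = p.1 := by
    rw [← mul_assoc, ← mul_assoc, cs.simple_mul_simple_self, one_mul,
      mul_assoc, cs.simple_mul_simple_self, mul_one]
  have h2 : (cs.simple i * p.1 * cs.simple i = cs.simple i) ↔ p.1 = cs.simple i := by
    constructor
    · intro h
      have := congrArg (fun x => cs.simple i * x * cs.simple i) h
      simpa [h1, cs.simple_mul_simple_self, mul_assoc] using this
    · rintro h
      rw [h]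
      rw [cs.simple_mul_simple_self, one_mul]
  ext
  · exact h1
  · simp only [h2]
    have h11 : (1 + 1 : ZMod 2) = 0 := by decide
    by_cases h : p.1 = cs.simple i
    · rw [if_pos h, add_assoc, h11, add_zero]
    · rw [if_neg h, add_zero, add_zero]

noncomputable def eta (i : B) : Equiv.Perm (W × ZMod 2) :=
  (etaFun_involutive cs i).toPerm _

lemma eta_apply (i : B) (p : W × ZMod 2) :
    eta cs i p = (cs.simple i * p.1 * cs.simple i,
      p.2 + if p.1 = cs.simple i then 1 else 0) := rfl

lemma prod_map_eta (ω : List B) (p : W × ZMod 2) :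
    ((ω.map (eta cs)).prod) p =
      (cs.wordProd ω * p.1 * (cs.wordProd ω)⁻¹,
        p.2 + ((cs.rightInvSeq ω).count p.1 : ZMod 2)) := by
  induction ω generalizing p with
  | nil => simp [rightInvSeq]
  | cons i ω ih =>
    have hris : cs.rightInvSeq (i :: ω)
        = ((cs.wordProd ω)⁻¹ * cs.simple i * cs.wordProd ω) :: cs.rightInvSeq ω := rfl
    simp only [map_cons, prod_cons, Equiv.Perm.mul_apply, ih, eta_apply, hris,
      cs.wordProd_cons, count_cons]
    ext
    · simp [mul_assoc]
    · simp only [mul_inv_rev, cs.inv_simple]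
      have : (cs.wordProd ω * p.1 * (cs.wordProd ω)⁻¹ = cs.simple i)
          ↔ ((cs.wordProd ω)⁻¹ * cs.simple i * cs.wordProd ω == p.1) = true := by
        rw [beq_iff_eq]
        constructor
        · intro h; rw [← h]; group
        · intro h; rw [← h]; group
      rcases Decidable.em (cs.wordProd ω * p.1 * (cs.wordProd ω)⁻¹ = cs.simple i) with h | h
      · rw [if_pos h]
        rw [this] at h
        rw [if_pos h]
        push_cast
        ring
      · rw [if_neg h]
        rw [this] at h
        rw [if_neg h]
        push_cast
        ring

lemma ris_cons (j : B) (ω : List B) :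
    cs.rightInvSeq (j :: ω)
      = ((cs.wordProd ω)⁻¹ * cs.simple j * cs.wordProd ω) :: cs.rightInvSeq ω := rfl

lemma conj_simple (i i' : B) :
    cs.simple i' * (cs.simple i * cs.simple i') * (cs.simple i')⁻¹
      = (cs.simple i * cs.simple i')⁻¹ := by
  rw [cs.inv_simple, mul_inv_rev, cs.inv_simple, cs.inv_simple]
  simp [mul_assoc, cs.simple_mul_simple_self]

lemma conj_simple_pow (i i' : B) (k : ℕ) :
    cs.simple i' * (cs.simple i * cs.simple i')^k * (cs.simple i')⁻¹
      = ((cs.simple i * cs.simple i')^k)⁻¹ := by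
  rw [← conj_pow, conj_simple, inv_pow]

lemma simple_mul_pow_comm (i i' : B) (k : ℕ) :
    cs.simple i' * (cs.simple i * cs.simple i')^k
      = ((cs.simple i * cs.simple i')^k)⁻¹ * cs.simple i' := by
  have h := conj_simple_pow cs i i' k
  rw [← h]
  group

lemma prod_alt_odd (i i' : B) (m : ℕ) :
    cs.wordProd (alternatingWord i i' (2*m+1)) =
      (cs.wordProd (alternatingWord i i' m))⁻¹ * cs.wordProd (alternatingWord i i' (m+1)) := by
  have hbc := simple_mul_pow_comm cs i i'
  rcases Nat.even_or_odd m with hm | hm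
  · obtain ⟨k, rfl⟩ := hm
    have e1 : (2*(k+k)+1)/2 = k+k := by omega
    have e2 : (k+k)/2 = k := by omega
    have e3 : (k+k+1)/2 = k := by omega
    have v1 : ¬ Even (2*(k+k)+1) := by rw [Nat.even_iff]; omega
    have v2 : Even (k+k) := ⟨k, rfl⟩
    have v3 : ¬ Even (k+k+1) := by rw [Nat.even_iff]; omega
    rw [cs.prod_alternatingWord_eq_mul_pow, cs.prod_alternatingWord_eq_mul_pow,
      cs.prod_alternatingWord_eq_mul_pow, e1, e2, e3, if_neg v1, if_pos v2, if_neg v3]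
    rw [one_mul, ← mul_assoc, ← hbc k]
    group
  · obtain ⟨k, rfl⟩ := hm
    have e1 : (2*(2*k+1)+1)/2 = 2*k+1 := by omega
    have e2 : (2*k+1)/2 = k := by omega
    have e3 : (2*k+1+1)/2 = k+1 := by omega
    have v1 : ¬ Even (2*(2*k+1)+1) := by rw [Nat.even_iff]; omega
    have v2 : ¬ Even (2*k+1) := by rw [Nat.even_iff]; omega
    have v3 : Even (2*k+1+1) := by rw [Nat.even_iff]; omega
    rw [cs.prod_alternatingWord_eq_mul_pow, cs.prod_alternatingWord_eq_mul_pow,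
      cs.prod_alternatingWord_eq_mul_pow, e1, e2, e3, if_neg v1, if_neg v2, if_pos v3]
    rw [one_mul, mul_inv_rev, cs.inv_simple]
    rw [← hbc k, mul_assoc, ← pow_add, show k+(k+1) = 2*k+1 from by omega]

lemma ris_alt_succ (i i' : B) (m : ℕ) :
    cs.rightInvSeq (alternatingWord i i' (m+1)) =
      cs.wordProd (alternatingWord i i' (2*m+1)) :: cs.rightInvSeq (alternatingWord i i' m) := by
  rw [alternatingWord_succ' i i' m, ris_cons]
  congr 1
  rw [prod_alt_odd, alternatingWord_succ' i i' m, cs.wordProd_cons, ← mul_assoc]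

lemma ris_alt (i i' : B) (n : ℕ) :
    cs.rightInvSeq (alternatingWord i i' n) =
      (List.range n).reverse.map (fun k => cs.wordProd (alternatingWord i i' (2*k+1))) := by
  induction n with
  | zero => simp [alternatingWord]
  | succ n ih =>
    rw [ris_alt_succ, ih, List.range_succ, List.reverse_append]
    simp

lemma count_ris_alt (i i' : B) {m : ℕ}
    (hm : (cs.simple i * cs.simple i')^m = 1) (t : W) :
    (((cs.rightInvSeq (alternatingWord i i' (2*m))).count t : ℕ) : ZMod 2) = 0 := by
  have hf : ∀ k, cs.wordProd (alternatingWord i i' (2*(m+k)+1))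
      = cs.wordProd (alternatingWord i i' (2*k+1)) := by
    intro k
    have e1 : (2*(m+k)+1)/2 = m + k := by omega
    have e2 : (2*k+1)/2 = k := by omega
    have v1 : ¬ Even (2*(m+k)+1) := by rw [Nat.even_iff]; omega
    have v2 : ¬ Even (2*k+1) := by rw [Nat.even_iff]; omega
    rw [cs.prod_alternatingWord_eq_mul_pow, cs.prod_alternatingWord_eq_mul_pow,
      e1, e2, if_neg v1, if_neg v2, pow_add, hm, one_mul]
  rw [ris_alt, List.map_reverse, List.count_reverse,
    show 2*m = m + m from by omega, List.range_add, List.map_append, List.count_append]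
  have : (List.range m).map ((fun k => cs.wordProd (alternatingWord i i' (2*k+1))) ∘ (m + ·))
      = (List.range m).map (fun k => cs.wordProd (alternatingWord i i' (2*k+1))) := by
    apply List.map_congr_left
    intro k _
    simpa using hf k
  rw [List.map_map, this]
  push_cast
  exact CharTwo.add_self_eq_zero _

lemma map_eta_alt (i i' : B) (m : ℕ) :
    ((alternatingWord i i' (2*m)).map (eta cs)).prod = (eta cs i * eta cs i')^m := by
  induction m with
  | zero => simp [alternatingWord]
  | succ m ih =>
    have h1 : 2*(m+1) = (2*m+1)+1 := by omega
    rw [h1, alternatingWord_succ' i i' (2*m+1), alternatingWord_succ' i i' (2*m)]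
    have v1 : ¬ Even (2*m+1) := by rw [Nat.even_iff]; omega
    have v2 : Even (2*m) := ⟨m, by omega⟩
    rw [if_neg v1, if_pos v2, List.map_cons, List.map_cons, List.prod_cons, List.prod_cons, ih,
      pow_succ']
    rw [← mul_assoc]

lemma eta_liftable : M.IsLiftable (eta cs) := by
  intro i i'
  rw [← map_eta_alt]
  apply Equiv.ext
  intro p
  rw [show (1 : Equiv.Perm (W × ZMod 2)) p = p from rfl, prod_map_eta]
  have h1 : cs.wordProd (alternatingWord i i' (2 * M i i')) = 1 := by
    rw [cs.prod_alternatingWord_eq_mul_pow, if_pos ⟨M i i', by omega⟩,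
      show 2 * M i i' / 2 = M i i' from by omega, one_mul, cs.simple_mul_simple_pow]
  rw [h1, count_ris_alt cs i i' (cs.simple_mul_simple_pow i i') p.1]
  simp

noncomputable def phi : W →* Equiv.Perm (W × ZMod 2) := cs.lift ⟨eta cs, eta_liftable cs⟩

lemma phi_wordProd (ω : List B) : phi cs (cs.wordProd ω) = (ω.map (eta cs)).prod := by
  induction ω with
  | nil => simp
  | cons i ω ih =>
    rw [cs.wordProd_cons, map_mul, ih, List.map_cons, List.prod_cons]
    congr 1
    exact cs.lift_apply_simple (eta_liftable cs) i

lemma count_parity {ω ω' : List B} (h : cs.wordProd ω = cs.wordProd ω') (t : W) :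
    (((cs.rightInvSeq ω).count t : ℕ) : ZMod 2) = ((cs.rightInvSeq ω').count t : ZMod 2) := by
  have key : ((ω.map (eta cs)).prod) (t, 0) = ((ω'.map (eta cs)).prod) (t, 0) := by
    rw [← phi_wordProd, ← phi_wordProd, h]
  rw [prod_map_eta, prod_map_eta] at key
  have := congrArg Prod.snd key
  simpa using this

lemma ris_append (ω₁ ω₂ : List B) : cs.rightInvSeq (ω₁ ++ ω₂) =
    (cs.rightInvSeq ω₁).map (fun t => (cs.wordProd ω₂)⁻¹ * t * cs.wordProd ω₂)
      ++ cs.rightInvSeq ω₂ := by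
  induction ω₁ with
  | nil => simp [rightInvSeq]
  | cons j ω₁ ih =>
    rw [List.cons_append, ris_cons, ris_cons, ih, List.map_cons, List.cons_append]
    congr 1
    rw [cs.wordProd_append]
    group

lemma mem_ris_of_descent {ω : List B} (hred : cs.IsReduced ω) {i : B}
    (h : cs.length (cs.wordProd ω * cs.simple i) < cs.length (cs.wordProd ω)) :
    cs.simple i ∈ cs.rightInvSeq ω := by
  obtain ⟨ω', hlen', hprod'⟩ := cs.exists_reduced_word (cs.wordProd ω * cs.simple i)
  have hred' : cs.IsReduced ω' := by
    show cs.length (cs.wordProd ω') = ω'.length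
    exact hlen'
  have hπ : cs.wordProd ω = cs.wordProd (ω' ++ [i]) := by
    rw [cs.wordProd_append, cs.wordProd_singleton, ← hprod',
      cs.simple_mul_simple_cancel_right]
  have hc0 : (cs.rightInvSeq ω').count (cs.simple i) = 0 := by
    by_contra hc
    have hmem : cs.simple i ∈ cs.rightInvSeq ω' := by
      rw [← List.count_pos_iff]
      omega
    have := (cs.isRightInversion_of_mem_rightInvSeq hred' hmem).2
    rw [← hprod', cs.simple_mul_simple_cancel_right] at this
    omega
  have hcount : ((cs.rightInvSeq (ω' ++ [i])).count (cs.simple i) : ZMod 2) = 1 := by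
    rw [ris_append, List.count_append]
    have hconj : ((cs.rightInvSeq ω').map
        (fun t => (cs.wordProd [i])⁻¹ * t * cs.wordProd [i])).count (cs.simple i) = 0 := by
      rw [cs.wordProd_singleton]
      have hfix : (cs.simple i)⁻¹ * cs.simple i * cs.simple i = cs.simple i := by group
      have hinj : Function.Injective (fun t : W => (cs.simple i)⁻¹ * t * cs.simple i) :=
        fun a b hab => by
          simp only at hab
          rwa [mul_right_cancel_iff, mul_left_cancel_iff] at hab
      have hkey := List.count_map_of_injective (cs.rightInvSeq ω')
        (fun t : W => (cs.simple i)⁻¹ * t * cs.simple i) hinj (cs.simple i)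
      rw [hfix] at hkey
      rw [hkey]
      exact hc0
    rw [hconj]
    have : cs.rightInvSeq [i] = [cs.simple i] := cs.rightInvSeq_singleton i
    rw [this]
    simp
  have := count_parity cs hπ (cs.simple i)
  rw [hcount] at this
  have hne : (cs.rightInvSeq ω).count (cs.simple i) ≠ 0 := by
    intro h0
    rw [h0] at this
    simp at this
  rw [← List.count_pos_iff]
  omega

lemma lifting {w : W} {i j : B}
    (hleft : cs.length (cs.simple j * w) < cs.length w)
    (hright : cs.length (w * cs.simple i) < cs.length w)
    (hne : cs.simple j * w * cs.simple i ≠ w) :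
    cs.length (cs.simple j * w * cs.simple i) < cs.length (w * cs.simple i) := by
  obtain ⟨ω₁, hlen₁, hprod₁⟩ := cs.exists_reduced_word (cs.simple j * w)
  have hπ : cs.wordProd (j :: ω₁) = w := by
    rw [cs.wordProd_cons, ← hprod₁, ← mul_assoc, cs.simple_mul_simple_self, one_mul]
  have hlw : cs.length (cs.simple j * w) + 1 = cs.length w := by
    rcases cs.length_simple_mul w j with h | h
    · omega
    · exact h
  have hred : cs.IsReduced (j :: ω₁) := by
    show cs.length (cs.wordProd (j :: ω₁)) = (j :: ω₁).length
    rw [hπ, List.length_cons, ← (show cs.length (cs.wordProd ω₁) = ω₁.length from hlen₁), ← hprod₁]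
    omega
  have hmem := mem_ris_of_descent cs hred (i := i) (by rw [hπ]; exact hright)
  obtain ⟨k, hk, hget⟩ := List.mem_iff_getElem.mp hmem
  rw [← List.getD_eq_getElem _ 1 hk] at hget
  have herase : w * cs.simple i = cs.wordProd ((j :: ω₁).eraseIdx k) := by
    rw [← hπ, ← cs.wordProd_mul_getD_rightInvSeq, hget]
  rw [cs.length_rightInvSeq, List.length_cons] at hk
  match k with
  | 0 =>
    exfalso
    apply hne
    rw [List.eraseIdx_cons_zero] at herase
    rw [mul_assoc, herase, ← hprod₁, ← mul_assoc, cs.simple_mul_simple_self, one_mul]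
  | (k'+1) =>
    rw [List.eraseIdx_cons_succ, cs.wordProd_cons] at herase
    have h2 : cs.simple j * (w * cs.simple i) = cs.wordProd (ω₁.eraseIdx k') := by
      rw [herase, ← mul_assoc, cs.simple_mul_simple_self, one_mul]
    have h3 : cs.length (cs.simple j * (w * cs.simple i)) ≤ (ω₁.eraseIdx k').length := by
      rw [h2]
      exact cs.length_wordProd_le _
    have h4 : (ω₁.eraseIdx k').length = ω₁.length - 1 := by
      rw [List.length_eraseIdx]
      simp only [if_pos (by omega : k' < ω₁.length)]
    have h5 : cs.length (w * cs.simple i) + 1 = cs.length w := by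
      rcases cs.length_mul_simple w i with h | h
      · omega
      · exact h
    rw [← mul_assoc] at h3
    have hl1 : cs.length (cs.simple j * w) = ω₁.length := by rw [hprod₁]; exact hlen₁
    omega

lemma theta_wordProd (θ : W ≃* W) (hS : ∀ i : B, ∃ j : B, θ (cs.simple i) = cs.simple j)
    (ω : List B) : ∃ ω' : List B, ω'.length = ω.length ∧ θ (cs.wordProd ω) = cs.wordProd ω' := by
  induction ω with
  | nil => exact ⟨[], rfl, by simp⟩
  | cons i ω ih =>
    obtain ⟨ω', hl, hp⟩ := ih
    obtain ⟨j, hj⟩ := hS i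
    exact ⟨j :: ω', by simp [hl], by rw [cs.wordProd_cons, map_mul, hj, hp, cs.wordProd_cons]⟩

lemma length_theta_le (θ : W ≃* W) (hS : ∀ i : B, ∃ j : B, θ (cs.simple i) = cs.simple j)
    (w : W) : cs.length (θ w) ≤ cs.length w := by
  obtain ⟨ω, hlen, hprod⟩ := cs.exists_reduced_word w
  obtain ⟨ω', hl, hp⟩ := theta_wordProd cs θ hS ω
  have hθ : θ w = cs.wordProd ω' := by rw [hprod, hp]
  rw [hθ]
  calc cs.length (cs.wordProd ω') ≤ ω'.length := cs.length_wordProd_le _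
    _ = ω.length := hl
    _ = cs.length w := by rw [hprod]; exact hlen.symm

lemma length_theta_eq (θ : W ≃* W) (hinv : ∀ w : W, θ (θ w) = w)
    (hS : ∀ i : B, ∃ j : B, θ (cs.simple i) = cs.simple j)
    (w : W) : cs.length (θ w) = cs.length w := by
  refine le_antisymm (length_theta_le cs θ hS w) ?_
  have := length_theta_le cs θ hS (θ w)
  rwa [hinv] at this

end StrongExch


/-- `θ` maps simple reflections to simple reflections. -/
def PreservesSimples {B W : Type*} [Group W] {M : CoxeterMatrix B}
    (cs : CoxeterSystem M W) (θ : W ≃* W) : Prop :=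
  ∀ i : B, ∃ j : B, θ (cs.simple i) = cs.simple j

open Classical in
/-- The twisted action `w · s̲`. -/
noncomputable def twMul {B W : Type*} [Group W] {M : CoxeterMatrix B}
    (cs : CoxeterSystem M W) (θ : W ≃* W) (w : W) (i : B) : W :=
  if θ (cs.simple i) * w * cs.simple i = w then w * cs.simple i
  else θ (cs.simple i) * w * cs.simple i

/-- Action of a word of symbols. -/
noncomputable def twWord {B W : Type*} [Group W] {M : CoxeterMatrix B}
    (cs : CoxeterSystem M W) (θ : W ≃* W) (w : W) (l : List B) : W :=
  l.foldl (twMul cs θ) w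

/-- For a twisted involution `w`, `ℓ(ws) < ℓ(w)` iff `ℓ(w · s̲) < ℓ(w)`. -/
theorem stmt_4 {B W : Type*} [Group W] {M : CoxeterMatrix B}
    (cs : CoxeterSystem M W) (θ : W ≃* W)
    (hinv : ∀ w : W, θ (θ w) = w) (hS : PreservesSimples cs θ)
    (w : W) (hw : θ w = w⁻¹) (i : B) :
    cs.length (w * cs.simple i) < cs.length w ↔
      cs.length (twMul cs θ w i) < cs.length w := by
  classical
  unfold twMul
  by_cases h : θ (cs.simple i) * w * cs.simple i = w
  · rw [if_pos h]
  · rw [if_neg h]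
    obtain ⟨j, hj⟩ := hS i
    have hθw : θ (cs.simple i) * w = θ (cs.simple i * w⁻¹) := by
      rw [map_mul, map_inv, hw, inv_inv]
    have hlen1 : cs.length (θ (cs.simple i) * w) = cs.length (w * cs.simple i) := by
      rw [hθw, StrongExch.length_theta_eq cs θ hinv hS, ← cs.length_inv, mul_inv_rev,
        inv_inv, cs.inv_simple]
    rw [hj] at h hlen1 ⊢
    constructor
    · intro hlt
      have hleft : cs.length (cs.simple j * w) < cs.length w := by rw [hlen1]; exact hlt
      exact lt_trans (StrongExch.lifting cs hleft hlt h) hlt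
    · intro hlt
      by_contra hge
      rcases cs.length_mul_simple w i with hcase | hcase
      · have h1 : cs.length (cs.simple j * w) = cs.length w + 1 := by rw [hlen1, hcase]
        rcases cs.length_mul_simple (cs.simple j * w) i with h2 | h2 <;> omega
      · exact hge (by omega)
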